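/- arXiv:2604.15248 — 3 statements merged into one kernel-verified Lean document; each statement's English description precedes it below -/
import Mathlib

section
/- There do not exist functions ρ₀, ρ₁ : {0,1}^n → {-1,1} and σ : {0,1}^n → ℝ such that for all x, y ∈ {0,1}^n, ρ₀(x) ρ₁(y) σ(x+y) = (-1)^{x·y}, provided n ≥ 1. -/
open Finset Real

/-- numeric value of a bit -/
def bit (b : Bool) : ℕ := if b then 1 else 0

/-- quadratic function Q(x) = Σ_{i<j} x_i x_j -/
def Q {n : ℕ} (x : Fin n → Bool) : ℕ :=
  ∑ i : Fin n, ∑ j : Fin n, if i < j then bit (x i) * bit (x j) else 0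

/-- Hamming weight -/
def wt {n : ℕ} (x : Fin n → Bool) : ℕ := ∑ i : Fin n, bit (x i)

/-- inner product (before reduction mod 2) -/
def ip {n : ℕ} (x y : Fin n → Bool) : ℕ := ∑ i : Fin n, bit (x i) * bit (y i)

/-- bitwise XOR -/
def xorv {n : ℕ} (x y : Fin n → Bool) : Fin n → Bool := fun i => xor (x i) (y i)

theorem no_exact_factorization {n : ℕ} (hn : 1 ≤ n) :
    ¬ ∃ (ρ₀ ρ₁ : (Fin n → Bool) → ℝ) (σ : (Fin n → Bool) → ℝ),
      (∀ x, ρ₀ x = -1 ∨ ρ₀ x = 1) ∧ (∀ x, ρ₁ x = -1 ∨ ρ₁ x = 1) ∧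
      (∀ x y, ρ₀ x * ρ₁ y * σ (xorv x y) = (-1 : ℝ) ^ (ip x y)) := by
  rintro ⟨ρ₀, ρ₁, σ, h₀, h₁, h⟩
  set i₀ : Fin n := ⟨0, hn⟩ with hi₀
  set z : Fin n → Bool := fun _ => false with hz
  set e : Fin n → Bool := fun i => decide (i = i₀) with he
  have hxz : ∀ x : Fin n → Bool, xorv x z = x := by
    intro x; funext i; simp [xorv, hz]
  have hzx : ∀ x : Fin n → Bool, xorv z x = x := by
    intro x; funext i; simp [xorv, hz]
  have hee : xorv e e = z := by
    funext i; simp [xorv, hz]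
  have ipz : ∀ x : Fin n → Bool, ip x z = 0 := by
    intro x; simp [ip, hz, bit]
  have ipz' : ∀ x : Fin n → Bool, ip z x = 0 := by
    intro x; simp [ip, hz, bit]
  have ipee : ip e e = 1 := by
    unfold ip
    rw [Finset.sum_eq_single i₀]
    · simp [he, bit]
    · intro b _ hb; simp [he, bit, hb]
    · simp
  have h1 : ρ₀ z * ρ₁ z * σ z = 1 := by
    have := h z z; rwa [hxz, ipz', pow_zero] at this
  have h2 : ρ₀ e * ρ₁ z * σ e = 1 := by
    have := h e z; rwa [hxz, ipz, pow_zero] at this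
  have h3 : ρ₀ z * ρ₁ e * σ e = 1 := by
    have := h z e; rwa [hzx, ipz', pow_zero] at this
  have h4 : ρ₀ e * ρ₁ e * σ z = -1 := by
    have := h e e; rwa [hee, ipee, pow_one] at this
  have s1 : ρ₀ z ^ 2 = 1 := by rcases h₀ z with h' | h' <;> rw [h'] <;> ring
  have s2 : ρ₀ e ^ 2 = 1 := by rcases h₀ e with h' | h' <;> rw [h'] <;> ring
  have s3 : ρ₁ z ^ 2 = 1 := by rcases h₁ z with h' | h' <;> rw [h'] <;> ring
  have s4 : ρ₁ e ^ 2 = 1 := by rcases h₁ e with h' | h' <;> rw [h'] <;> ring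
  -- multiply h2*h3 and h1*h4
  have m1 : (ρ₀ e * ρ₁ e * ρ₀ z * ρ₁ z) * (σ e)^2 = 1 := by
    have := congrArg₂ (· * ·) h2 h3
    nlinarith [this]
  have m2 : (ρ₀ e * ρ₁ e * ρ₀ z * ρ₁ z) * (σ z)^2 = -1 := by
    have := congrArg₂ (· * ·) h1 h4
    nlinarith [this]
  nlinarith [sq_nonneg (σ e * σ z), sq_nonneg (σ e), sq_nonneg (σ z), m1, m2, s1, s2, s3, s4, sq_nonneg (ρ₀ e * ρ₁ e * ρ₀ z * ρ₁ z)]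
end

section
/- Let σ : {0,1}^n → ℝ be defined by σ(x) = √2 · (-1)^{Q(x)} if |x| is odd and σ(x) = 0 if |x| is even, where Q(x) = Σ_{i<j} x_i x_j. Then its Fourier transform σ̂(x) = (1/√(2^n)) Σ_y (-1)^{x·y} σ(y) satisfies σ̂(x) = √2 · sin(π(n - 2|x|)/4) for all x. In particular, if n is odd then |σ̂(x)| = 1 for all x. -/
open Finset Real

noncomputable def σodd {n : ℕ} (x : Fin n → Bool) : ℝ :=
  if Odd (wt x) then Real.sqrt 2 * (-1 : ℝ) ^ (Q x) else 0

noncomputable def hatσodd {n : ℕ} (x : Fin n → Bool) : ℝ :=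
  (Real.sqrt (2 ^ n))⁻¹ * ∑ y : Fin n → Bool, (-1 : ℝ) ^ (ip x y) * σodd y

lemma wt_le {n : ℕ} (x : Fin n → Bool) : wt x ≤ n := by
  unfold wt
  calc ∑ i : Fin n, bit (x i) ≤ ∑ _i : Fin n, 1 :=
        Finset.sum_le_sum (fun i _ => by unfold bit; split <;> simp)
    _ = n := by simp

lemma sq_wt {n : ℕ} (x : Fin n → Bool) : wt x * wt x = wt x + 2 * Q x := by
  unfold wt Q
  rw [Finset.sum_mul_sum]
  have key : ∀ i j : Fin n, bit (x i) * bit (x j) =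
      (if i < j then bit (x i) * bit (x j) else 0)
      + (if j < i then bit (x i) * bit (x j) else 0)
      + (if i = j then bit (x i) * bit (x j) else 0) := by
    intro i j
    rcases lt_trichotomy i j with h|h|h
    · simp [h, asymm h, h.ne]
    · simp [h]
    · simp [h, asymm h, h.ne']
  calc ∑ i : Fin n, ∑ j : Fin n, bit (x i) * bit (x j)
      = (∑ i : Fin n, ∑ j : Fin n, if i < j then bit (x i) * bit (x j) else 0)
        + (∑ i : Fin n, ∑ j : Fin n, if j < i then bit (x i) * bit (x j) else 0)
        + (∑ i : Fin n, ∑ j : Fin n, if i = j then bit (x i) * bit (x j) else 0) := by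
        simp_rw [← Finset.sum_add_distrib]
        exact Finset.sum_congr rfl fun i _ => Finset.sum_congr rfl fun j _ => key i j
    _ = ∑ i : Fin n, bit (x i)
        + 2 * ∑ i : Fin n, ∑ j : Fin n, if i < j then bit (x i) * bit (x j) else 0 := by
        have h1 : (∑ i : Fin n, ∑ j : Fin n, if j < i then bit (x i) * bit (x j) else 0)
            = ∑ i : Fin n, ∑ j : Fin n, if i < j then bit (x i) * bit (x j) else 0 := by
          rw [Finset.sum_comm]
          exact Finset.sum_congr rfl fun i _ => Finset.sum_congr rfl fun j _ => by
            split <;> simp [mul_comm]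
        have h2 : (∑ i : Fin n, ∑ j : Fin n, if i = j then bit (x i) * bit (x j) else 0)
            = ∑ i : Fin n, bit (x i) := by
          refine Finset.sum_congr rfl fun i _ => ?_
          rw [Finset.sum_ite_eq univ i (fun j => bit (x i) * bit (x j))]
          simp [bit]
        rw [h1, h2]; ring

lemma sum_factor {n : ℕ} (x : Fin n → Bool) (z : ℂ) :
    ∑ y : Fin n → Bool, (-1:ℂ)^(ip x y) * z^(wt y)
      = (1 - z)^(wt x) * (1 + z)^(n - wt x) := by
  have h1 : ∀ y : Fin n → Bool, (-1:ℂ)^(ip x y) * z^(wt y)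
      = ∏ i : Fin n, ((-1:ℂ)^(bit (x i) * bit (y i)) * z^(bit (y i))) := by
    intro y
    rw [Finset.prod_mul_distrib, Finset.prod_pow_eq_pow_sum, Finset.prod_pow_eq_pow_sum]
    rfl
  simp_rw [h1]
  rw [← Fintype.prod_sum (fun i (b : Bool) => (-1:ℂ)^(bit (x i) * bit b) * z^(bit b))]
  have h2 : ∀ i : Fin n, (∑ b : Bool, (-1:ℂ)^(bit (x i) * bit b) * z^(bit b))
      = if x i then 1 - z else 1 + z := by
    intro i
    rw [Fintype.sum_bool]
    cases h : x i <;> simp [bit, h] <;> ring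
  simp_rw [h2]
  rw [Finset.prod_ite (fun _ => (1 - z)) (fun _ => (1 + z)), Finset.prod_const, Finset.prod_const]
  have hw : (Finset.univ.filter (fun i => x i = true)).card = wt x := by
    rw [Finset.card_filter]
    unfold wt bit
    exact Finset.sum_congr rfl fun i _ => by cases x i <;> simp
  have hw' : (Finset.univ.filter (fun i => ¬ x i = true)).card = n - wt x := by
    have := Finset.card_filter_add_card_filter_not
      (s := (Finset.univ : Finset (Fin n))) (p := fun i => x i = true)
    simp only [Finset.card_univ, Fintype.card_fin] at this
    omega
  rw [hw, hw']

lemma sigma_cast {n : ℕ} (y : Fin n → Bool) :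
    (σodd y : ℂ) = (Real.sqrt 2 : ℝ) * Complex.I / 2
      * ((-Complex.I)^(wt y) - Complex.I^(wt y)) := by
  rcases Nat.even_or_odd (wt y) with ⟨t, ht⟩ | ⟨t, ht⟩
  · have h0 : σodd y = 0 := by
      simp [σodd, Nat.odd_iff, ht]
      omega
    have h1 : (-Complex.I)^(wt y) = Complex.I^(wt y) := by
      rw [ht, show t + t = 2*t by ring, pow_mul, pow_mul, neg_pow, Complex.I_sq]
      norm_num
    rw [h0, h1]; simp
  · have hQ : Q y = 2*(t*t) + t := by
      have h := sq_wt y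
      rw [ht] at h
      have hexp : (2*t+1) * (2*t+1) = 4*(t*t) + 4*t + 1 := by ring
      rw [hexp] at h
      omega
    have hσ : σodd y = Real.sqrt 2 * (-1:ℝ)^t := by
      have : (-1:ℝ)^(Q y) = (-1:ℝ)^t := by
        rw [hQ, pow_add, pow_mul]; norm_num
      simp only [σodd, this, ht, Nat.odd_iff]
      rw [if_pos (by omega)]
    have hI : (Complex.I)^(wt y) = (-1:ℂ)^t * Complex.I := by
      rw [ht, pow_succ, pow_mul, Complex.I_sq]
    have hI' : (-Complex.I)^(wt y) = -((-1:ℂ)^t * Complex.I) := by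
      rw [neg_pow, ht, show (-1:ℂ)^(2*t+1) = -1 from Odd.neg_one_pow ⟨t, by ring⟩, ← ht, hI]
      ring
    rw [hσ, hI, hI']
    push_cast
    ring_nf
    rw [Complex.I_sq]
    ring

lemma trig {n k : ℕ} (hk : k ≤ n) :
    (((Real.sqrt (2^n) : ℝ) : ℂ))⁻¹ * ((Real.sqrt 2 : ℝ) * Complex.I / 2 *
       ((1+Complex.I)^k*(1-Complex.I)^(n-k) - (1-Complex.I)^k*(1+Complex.I)^(n-k)))
    = ((Real.sqrt 2 * Real.sin (Real.pi * ((n:ℝ) - 2*(k:ℝ))/4) : ℝ) : ℂ) := by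
  set s : ℂ := ((Real.sqrt 2 : ℝ) : ℂ) with hs_def
  set θ : ℝ := Real.pi * ((n:ℝ) - 2*(k:ℝ))/4 with hθ
  have h2 : s * s = 2 := by
    rw [hs_def, ← Complex.ofReal_mul, Real.mul_self_sqrt (by norm_num)]; norm_num
  have e1 : (1 + Complex.I) = s * Complex.exp ((Real.pi/4 : ℝ) * Complex.I) := by
    rw [Complex.exp_mul_I, ← Complex.ofReal_cos, ← Complex.ofReal_sin,
      Real.cos_pi_div_four, Real.sin_pi_div_four]
    push_cast
    linear_combination (-(1+Complex.I)/2) * h2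
  have e2 : (1 - Complex.I) = s * Complex.exp (((-(Real.pi/4)) : ℝ) * Complex.I) := by
    rw [Complex.exp_mul_I, ← Complex.ofReal_cos, ← Complex.ofReal_sin,
      Real.cos_neg, Real.sin_neg, Real.cos_pi_div_four, Real.sin_pi_div_four]
    push_cast
    linear_combination (-(1-Complex.I)/2) * h2
  have expand : ∀ (u v : ℝ),
      (s * Complex.exp ((u:ℝ) * Complex.I))^k * (s * Complex.exp ((v:ℝ) * Complex.I))^(n-k)
      = s^n * Complex.exp (((k*u + ((n:ℝ)-k)*v : ℝ)) * Complex.I) := by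
    intro u v
    rw [mul_pow, mul_pow, ← Complex.exp_nat_mul, ← Complex.exp_nat_mul,
      mul_mul_mul_comm, ← pow_add, Nat.add_sub_cancel' hk, ← Complex.exp_add]
    congr 1
    push_cast [Nat.cast_sub hk]
    ring
  have pA : (1+Complex.I)^k * (1-Complex.I)^(n-k)
      = s^n * Complex.exp (((-θ : ℝ)) * Complex.I) := by
    rw [e1, e2, expand (Real.pi/4) (-(Real.pi/4))]
    congr 3
    rw [hθ]; ring
  have pB : (1-Complex.I)^k * (1+Complex.I)^(n-k)
      = s^n * Complex.exp (((θ : ℝ)) * Complex.I) := by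
    rw [e1, e2, expand (-(Real.pi/4)) (Real.pi/4)]
    congr 3
    rw [hθ]; ring
  have hdiff : Complex.exp (((-θ:ℝ)) * Complex.I) - Complex.exp ((θ:ℝ) * Complex.I)
      = -2 * (Real.sin θ : ℂ) * Complex.I := by
    rw [Complex.exp_mul_I, Complex.exp_mul_I, ← Complex.ofReal_cos, ← Complex.ofReal_sin,
      ← Complex.ofReal_cos, ← Complex.ofReal_sin]
    push_cast [Real.cos_neg, Real.sin_neg]
    ring
  have hsq : ((Real.sqrt (2^n) : ℝ) : ℂ) = s^n := by
    have : Real.sqrt (2^n) = (Real.sqrt 2)^n := by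
      rw [show (2:ℝ)^n = ((Real.sqrt 2)^n)^2 by
          rw [← pow_mul, mul_comm, pow_mul, Real.sq_sqrt (by norm_num)],
        Real.sqrt_sq (by positivity)]
    rw [this]; push_cast [hs_def]; rfl
  have hsne : s^n ≠ 0 := pow_ne_zero _ (by
    rw [hs_def]
    exact Complex.ofReal_ne_zero.mpr (by positivity))
  rw [pA, pB, hsq, ← mul_sub, hdiff]
  push_cast
  field_simp
  ring_nf
  rw [Complex.I_sq]
  ring

theorem hatσodd_eq {n : ℕ} :
    (∀ x : Fin n → Bool,
      hatσodd x = Real.sqrt 2 * Real.sin (Real.pi * ((n : ℝ) - 2 * (wt x : ℝ)) / 4)) ∧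
    (Odd n → ∀ x : Fin n → Bool, |hatσodd x| = 1) := by
  have main : ∀ x : Fin n → Bool,
      hatσodd x = Real.sqrt 2 * Real.sin (Real.pi * ((n : ℝ) - 2 * (wt x : ℝ)) / 4) := by
    intro x
    apply Complex.ofReal_injective
    have hcast : ((hatσodd x : ℝ) : ℂ)
        = (((Real.sqrt (2^n) : ℝ) : ℂ))⁻¹
          * ∑ y : Fin n → Bool, (-1:ℂ)^(ip x y) * (σodd y : ℂ) := by
      unfold hatσodd
      push_cast
      ring
    have hsum : ∑ y : Fin n → Bool, (-1:ℂ)^(ip x y) * (σodd y : ℂ)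
        = (Real.sqrt 2 : ℝ) * Complex.I / 2 *
          ((1+Complex.I)^(wt x)*(1-Complex.I)^(n-wt x)
            - (1-Complex.I)^(wt x)*(1+Complex.I)^(n-wt x)) := by
      have step1 : ∑ y : Fin n → Bool, (-1:ℂ)^(ip x y) * (σodd y : ℂ)
          = (Real.sqrt 2 : ℝ) * Complex.I / 2 *
            ((∑ y : Fin n → Bool, (-1:ℂ)^(ip x y) * (-Complex.I)^(wt y))
              - (∑ y : Fin n → Bool, (-1:ℂ)^(ip x y) * Complex.I^(wt y))) := by
        rw [← Finset.sum_sub_distrib, Finset.mul_sum]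
        refine Finset.sum_congr rfl fun y _ => ?_
        rw [sigma_cast]
        ring
      rw [step1, sum_factor x (-Complex.I), sum_factor x Complex.I, sub_neg_eq_add,
        show (1 + -Complex.I) = 1 - Complex.I by ring]
    rw [hcast, hsum, trig (wt_le x)]
  refine ⟨main, fun hn x => ?_⟩
  obtain ⟨u, hu⟩ := hn
  set θ : ℝ := Real.pi * ((n : ℝ) - 2 * (wt x : ℝ)) / 4 with hθ
  have hcos : Real.cos (2 * θ) = 0 := by
    have harg : 2 * θ = ((u - (wt x : ℤ) : ℤ) : ℝ) * Real.pi + Real.pi / 2 := by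
      have hnr : (n:ℝ) = 2*(u:ℝ)+1 := by rw [hu]; push_cast; ring
      rw [hθ, hnr]
      push_cast
      ring
    rw [harg, Real.cos_add_pi_div_two, Real.sin_int_mul_pi, neg_zero]
  have hsq : (Real.sqrt 2 * Real.sin θ)^2 = 1 := by
    rw [mul_pow, Real.sq_sqrt (by norm_num : (0:ℝ) ≤ 2), Real.sin_sq, Real.cos_sq, hcos]
    ring
  rw [main x, ← hθ, ← Real.sqrt_sq_eq_abs, hsq, Real.sqrt_one]
end

section
/- Let ρ₀(x) = ρ₁(x) = (-1)^{Q(x)} and let σ(x) = √2 (-1)^{Q(x)} for |x| odd, σ(x) = 0 for |x| even. Then for all x, y ∈ {0,1}^n: ρ₀(x)ρ₁(y)σ(x+y) = √2 · (-1)^{x·y} when |x+y| is odd, and ρ₀(x)ρ₁(y)σ(x+y) = 0 when |x+y| is even. -/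
open Finset Real

lemma split_sum {n : ℕ} (a b : Fin n → ZMod 2) :
    (∑ i, a i) * (∑ j, b j)
      = (∑ i, a i * b i)
        + (∑ i : Fin n, ∑ j : Fin n, if i < j then a i * b j else 0)
        + (∑ i : Fin n, ∑ j : Fin n, if i < j then b i * a j else 0) := by
  rw [Finset.sum_mul_sum]
  have h : ∀ i : Fin n, ∑ j : Fin n, a i * b j
      = ∑ j : Fin n, ((if i = j then a i * b j else 0)
          + (if i < j then a i * b j else 0) + (if j < i then a i * b j else 0)) := by
    intro i
    refine Finset.sum_congr rfl fun j _ => ?_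
    rcases lt_trichotomy i j with h | h | h
    · simp [h, h.ne, h.not_gt]
    · simp [h, lt_irrefl]
    · simp [h, h.ne', h.not_gt]
  simp only [h, Finset.sum_add_distrib]
  have h1 : (∑ i : Fin n, ∑ j : Fin n, if i = j then a i * b j else 0) = ∑ i, a i * b i := by
    simp
  have h2 : (∑ i : Fin n, ∑ j : Fin n, if j < i then a i * b j else 0)
      = ∑ i : Fin n, ∑ j : Fin n, if i < j then b i * a j else 0 := by
    rw [Finset.sum_comm]
    refine Finset.sum_congr rfl fun i _ => Finset.sum_congr rfl fun j _ => ?_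
    rw [mul_comm]
  rw [h1, h2]

lemma bit_xor (a b : Bool) : ((bit (xor a b) : ℕ) : ZMod 2) = (bit a : ZMod 2) + (bit b : ZMod 2) := by
  cases a <;> cases b <;> decide

lemma wt_xor_cast {n : ℕ} (x y : Fin n → Bool) :
    ((wt (xorv x y) : ℕ) : ZMod 2) = (wt x : ZMod 2) + (wt y : ZMod 2) := by
  simp only [wt, xorv, Nat.cast_sum, bit_xor, Finset.sum_add_distrib]

lemma key {n : ℕ} (x y : Fin n → Bool) :
    ((Q x + Q y + Q (xorv x y) + ip x y : ℕ) : ZMod 2) = (wt x : ZMod 2) * (wt y : ZMod 2) := by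
  have hQ : ((Q (xorv x y) : ℕ) : ZMod 2)
      = (Q x : ZMod 2) + (Q y : ZMod 2)
        + (∑ i : Fin n, ∑ j : Fin n, if i < j then ((bit (x i) : ZMod 2)) * (bit (y j)) else 0)
        + (∑ i : Fin n, ∑ j : Fin n, if i < j then ((bit (y i) : ZMod 2)) * (bit (x j)) else 0) := by
    simp only [Q, xorv, Nat.cast_sum]
    have : ∀ i j : Fin n,
        ((if i < j then bit (xor (x i) (y i)) * bit (xor (x j) (y j)) else 0 : ℕ) : ZMod 2)
        = (if i < j then ((bit (x i) : ZMod 2)) * (bit (x j)) else 0)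
          + (if i < j then ((bit (x i) : ZMod 2)) * (bit (y j)) else 0)
          + (if i < j then ((bit (y i) : ZMod 2)) * (bit (x j)) else 0)
          + (if i < j then ((bit (y i) : ZMod 2)) * (bit (y j)) else 0) := by
      intro i j
      by_cases h : i < j
      · simp only [h, if_true, Nat.cast_mul, bit_xor]
        ring
      · simp [h]
    simp only [this, Finset.sum_add_distrib]
    push_cast
    ring
  have hwt : (wt x : ZMod 2) * (wt y : ZMod 2)
      = (ip x y : ZMod 2)
        + (∑ i : Fin n, ∑ j : Fin n, if i < j then ((bit (x i) : ZMod 2)) * (bit (y j)) else 0)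
        + (∑ i : Fin n, ∑ j : Fin n, if i < j then ((bit (y i) : ZMod 2)) * (bit (x j)) else 0) := by
    simp only [wt, ip, Nat.cast_sum, Nat.cast_mul]
    exact split_sum (fun i => (bit (x i) : ZMod 2)) (fun i => (bit (y i) : ZMod 2))
  push_cast
  push_cast at hQ hwt
  rw [hQ, hwt]
  ring_nf
  rw [show ((2:ZMod 2) = 0) by decide]
  ring

lemma neg_one_pow_congr' (m k : ℕ) (h : (m : ZMod 2) = (k : ZMod 2)) :
    ((-1 : ℝ)) ^ m = (-1 : ℝ) ^ k := by
  rw [ZMod.natCast_eq_natCast_iff] at h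
  have h2 : m % 2 = k % 2 := h
  rcases Nat.even_or_odd m with he | ho
  · have : Even k := by
      rw [Nat.even_iff] at he ⊢; omega
    rw [he.neg_one_pow, this.neg_one_pow]
  · have : Odd k := by
      rw [Nat.odd_iff] at ho ⊢; omega
    rw [ho.neg_one_pow, this.neg_one_pow]

theorem rho_sigma_odd {n : ℕ} (x y : Fin n → Bool) :
    (Odd (wt (xorv x y)) →
      ((-1 : ℝ) ^ (Q x)) * ((-1 : ℝ) ^ (Q y)) * σodd (xorv x y)
        = Real.sqrt 2 * (-1 : ℝ) ^ (ip x y)) ∧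
    (Even (wt (xorv x y)) →
      ((-1 : ℝ) ^ (Q x)) * ((-1 : ℝ) ^ (Q y)) * σodd (xorv x y) = 0) := by
  constructor
  · intro hodd
    rw [σodd, if_pos hodd]
    have h1 : ((wt (xorv x y) : ℕ) : ZMod 2) = 1 := by
      have : ((wt (xorv x y) : ℕ) : ZMod 2) = ((1 : ℕ) : ZMod 2) := by
        rw [ZMod.natCast_eq_natCast_iff]
        rw [Nat.odd_iff] at hodd
        show wt (xorv x y) % 2 = 1 % 2
        omega
      simpa using this
    have hsum : (wt x : ZMod 2) + (wt y : ZMod 2) = 1 := by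
      rw [← wt_xor_cast]; exact h1
    have hprod : (wt x : ZMod 2) * (wt y : ZMod 2) = 0 := by
      have H : ∀ a b : ZMod 2, a + b = 1 → a * b = 0 := by decide
      exact H _ _ hsum
    have hk := key x y
    rw [hprod] at hk
    have hk2 : ((Q x + Q y + Q (xorv x y) : ℕ) : ZMod 2) = ((ip x y : ℕ) : ZMod 2) := by
      have H : ∀ a b : ZMod 2, a + b = 0 → a = b := by decide
      push_cast at hk ⊢
      exact H _ _ hk
    have hs := neg_one_pow_congr' _ _ hk2
    rw [pow_add, pow_add] at hs
    calc ((-1 : ℝ) ^ (Q x)) * ((-1 : ℝ) ^ (Q y)) * (Real.sqrt 2 * (-1 : ℝ) ^ (Q (xorv x y)))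
        = Real.sqrt 2 * ((-1 : ℝ) ^ (Q x) * (-1 : ℝ) ^ (Q y) * (-1 : ℝ) ^ (Q (xorv x y))) := by
          ring
      _ = Real.sqrt 2 * (-1 : ℝ) ^ (ip x y) := by rw [hs]
  · intro heven
    rw [σodd, if_neg (Nat.not_odd_iff_even.mpr heven)]
    ring
end
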